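/- arXiv:2412.16415 — 2 statements merged into one kernel-verified Lean document; each statement's English description precedes it below -/
import Mathlib

section
/- Let d ≥ 1, k ≥ 1, p ∈ [0,1], and perform Bernoulli bond percolation with parameter p on the complete 2^d-ary tree Γ^{(k)} of height k (each edge independently open with probability p). List the 2^{dk} leaves u_1, …, u_{2^{dk}} in lexicographic order of their digit strings in ({0,1}^d)^k, and for each i define Y_i := (y_{i1}, …, y_{ik}) ∈ {0,1}^k, where y_{ij} = 1 if the j-th edge on the path from the root to u_i is open and y_{ij} = 0 otherwise. Then the sequence (Y_i)_{1 ≤ i ≤ 2^{dk}} is a Markov chain: for every 2 ≤ i ≤ 2^{dk} − 1, Y_{i+1} is conditionally independent of (Y_1, …, Y_{i−1}) given Y_i. -/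
open MeasureTheory ProbabilityTheory Set Pointwise
open scoped ENNReal Classical

noncomputable section

/-- The lattice `ℤ^d`. -/
abbrev Zd (d : ℕ) := Fin d → ℤ

/-- Euclidean distance on `ℤ^d`. -/
def zdist {d : ℕ} (x y : Zd d) : ℝ := Real.sqrt (∑ i, ((x i - y i : ℤ) : ℝ) ^ 2)

/-- Euclidean norm on `ℤ^d`. -/
def znorm {d : ℕ} (x : Zd d) : ℝ := Real.sqrt (∑ i, ((x i : ℤ) : ℝ) ^ 2)

/-- Euclidean diameter of a subset of `ℤ^d`. -/
def zdiam {d : ℕ} (A : Set (Zd d)) : ℝ := sSup {r : ℝ | ∃ x ∈ A, ∃ y ∈ A, r = zdist x y}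

/-- The set of energies `Σ_{x,y∈A} μ(x)μ(y)(|x-y| ∨ 1)^(-β)` of probability measures `μ`
supported on `A`. -/
def discEnergies {d : ℕ} (β : ℝ) (A : Set (Zd d)) : Set ℝ :=
  { E | ∃ μ : Zd d → ℝ, (∀ x, 0 ≤ μ x) ∧ (∀ x, x ∉ A → μ x = 0) ∧ HasSum μ 1 ∧
        E = ∑' x, ∑' y, μ x * μ y * (max (zdist x y) 1) ^ (-β) }

/-- Discrete Newtonian capacity with parameter `β` (it equals `0` for `A = ∅`,
since `sInf ∅ = 0` and `0⁻¹ = 0` in `ℝ`). -/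
def discCap {d : ℕ} (β : ℝ) (A : Set (Zd d)) : ℝ := (sInf (discEnergies β A))⁻¹

/-- The box `Δ_k = [-2^(k-1), 2^(k-1))^d ∩ ℤ^d`. -/
def box (d k : ℕ) : Set (Zd d) := {x | ∀ i, -(2:ℤ)^(k-1) ≤ x i ∧ x i < (2:ℤ)^(k-1)}

/-- Edges of the complete `2^d`-ary tree of height `k`: the edge `(j, v)` joins the vertex
at depth `j+1` whose coordinatewise binary code is `v` to its parent. -/
abbrev TreeEdge (d k : ℕ) := Fin k × Zd d

/-- The coordinatewise binary code of the depth-`j` ancestor (in the `2^d`-ary tree of height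
`k`) of the leaf corresponding to the lattice point `x ∈ Δ_k`; the code of a depth-`j`
vertex consists of the `j` most significant base-2 digits of each coordinate of `x + 2^(k-1)`. -/
def ancestorCode (d k j : ℕ) (x : Zd d) : Zd d := fun i => (x i + 2 ^ (k - 1)) / 2 ^ (k - j)

/-- The discrete fractal percolation set `Q_d(p;k)` determined by a configuration `ω` of
open/closed edges of the `2^d`-ary tree of height `k`: the points of `Δ_k` whose
root-to-leaf path consists of open edges only. -/
def percCluster (d k : ℕ) (ω : TreeEdge d k → Bool) : Set (Zd d) :=
  {x | x ∈ box d k ∧ ∀ j : Fin k, ω (j, ancestorCode d k ((j : ℕ) + 1) x) = true}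

/-- The `t`-th leaf (`0`-indexed, `t < 2^(d*k)`) of the `2^d`-ary tree of height `k` in the
lexicographic order of digit strings, as a point of `Δ_k`: the digit string of the leaf,
read as a base-2 expansion (most significant symbol first, coordinates ordered within each
symbol), is the binary expansion of `t`. -/
def leafOfIdx (d k : ℕ) (t : ℕ) : Zd d :=
  fun i => ((∑ j ∈ Finset.range k,
      (t / 2 ^ (d * (k - 1 - j) + (d - 1 - (i : ℕ)))) % 2 * 2 ^ (k - 1 - j) : ℕ) : ℤ)
    - 2 ^ (k - 1)

/-- The depth of the most recent common ancestor of the leaves of `x, y ∈ Δ_k` in the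
`2^d`-ary tree of height `k`, i.e. the length of the common prefix of their digit strings. -/
def commonDepth (d k : ℕ) (x y : Zd d) : ℕ :=
  (Finset.range (k + 1)).sup fun ℓ => if ancestorCode d k ℓ x = ancestorCode d k ℓ y then ℓ else 0

/-- The graph distance from the leaf of `x` to the most recent common ancestor of the leaves
of `x, y ∈ Δ_k` in the `2^d`-ary tree of height `k`. -/
def treeDist (d k : ℕ) (x y : Zd d) : ℕ := k - commonDepth d k x y

/-- The vector of states of the `k` edges on the root-to-leaf path of the `t`-th leaf
(`0`-indexed, lexicographic order) in the edge configuration `ω`. -/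
def leafPath (d k : ℕ) (t : ℕ) (ω : TreeEdge d k → Bool) : Fin k → Bool :=
  fun j => ω (j, ancestorCode d k ((j : ℕ) + 1) (leafOfIdx d k t))

lemma sum_two_pow (n : ℕ) : ∑ r ∈ Finset.range n, 2^r = 2^n - 1 := by
  induction n with
  | zero => simp
  | succ n ih =>
    rw [Finset.sum_range_succ, ih]
    have : 1 ≤ 2^n := Nat.one_le_two_pow
    rw [pow_succ]; omega

lemma bits_inj {n : ℕ} : ∀ {b c : ℕ → ℕ}, (∀ m, b m ≤ 1) → (∀ m, c m ≤ 1) →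
    (∑ m ∈ Finset.range n, b m * 2^m = ∑ m ∈ Finset.range n, c m * 2^m) →
    ∀ m < n, b m = c m := by
  induction n with
  | zero => intro b c _ _ _ m hm; omega
  | succ n ih =>
    intro b c hb hc h m hm
    have hrw : ∀ b : ℕ → ℕ, ∑ m ∈ Finset.range (n+1), b m * 2^m
        = (∑ m ∈ Finset.range n, b (m+1) * 2^m) * 2 + b 0 := by
      intro b
      rw [Finset.sum_range_succ' (fun m => b m * 2^m) n, Finset.sum_mul]
      simp [pow_succ, mul_assoc]
    rw [hrw b, hrw c] at h
    have h0 : b 0 = c 0 ∧ (∑ m ∈ Finset.range n, b (m+1) * 2^m) = ∑ m ∈ Finset.range n, c (m+1) * 2^m := by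
      constructor
      · have := hb 0; have := hc 0; omega
      · have := hb 0; have := hc 0; omega
    rcases m with _ | m
    · exact h0.1
    · exact ih (fun m => hb (m+1)) (fun m => hc (m+1)) h0.2 m (by omega)

lemma q_repr : ∀ {n q : ℕ}, q < 2^n → ∑ r ∈ Finset.range n, (q/2^r % 2) * 2^r = q := by
  intro n
  induction n with
  | zero => intro q hq; interval_cases q <;> simp
  | succ n ih =>
    intro q hq
    rw [Finset.sum_range_succ' (fun r => (q/2^r % 2) * 2^r) n]
    have hdd : ∀ r : ℕ, q / 2^(r+1) = (q/2) / 2^r := by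
      intro r
      rw [pow_succ', Nat.div_div_eq_div_mul]
    have : ∑ r ∈ Finset.range n, (q/2^(r+1) % 2) * 2^(r+1)
        = (∑ r ∈ Finset.range n, ((q/2)/2^r % 2) * 2^r) * 2 := by
      rw [Finset.sum_mul]
      exact Finset.sum_congr rfl fun r _ => by rw [hdd r, pow_succ]; ring
    rw [this, ih (by rw [pow_succ] at hq; omega)]
    simp; omega

def bitAt (d k t m i : ℕ) : ℕ := t / 2 ^ (d * (k - 1 - m) + (d - 1 - i)) % 2

def gnat (d k j t i : ℕ) : ℕ := ∑ m ∈ Finset.range j, bitAt d k t m i * 2 ^ (j - 1 - m)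

lemma bitAt_le (d k t m i : ℕ) : bitAt d k t m i ≤ 1 := by
  have := Nat.mod_lt (t / 2 ^ (d * (k - 1 - m) + (d - 1 - i))) (show 0 < 2 by norm_num)
  unfold bitAt; omega

lemma leaf_add (d k t : ℕ) (i : Fin d) :
    leafOfIdx d k t i + 2^(k-1) = ((∑ m ∈ Finset.range k, bitAt d k t m i * 2^(k-1-m) : ℕ) : ℤ) := by
  simp [leafOfIdx, bitAt]

lemma fdiv (d k j t i : ℕ) (hj : j ≤ k) :
    (∑ m ∈ Finset.range k, bitAt d k t m i * 2^(k-1-m)) / 2^(k-j) = gnat d k j t i := by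
  have hsplit : ∑ m ∈ Finset.range k, bitAt d k t m i * 2^(k-1-m)
      = (∑ m ∈ Finset.range j, bitAt d k t m i * 2^(k-1-m))
        + ∑ m ∈ Finset.Ico j k, bitAt d k t m i * 2^(k-1-m) := by
    rw [Finset.range_eq_Ico, Finset.range_eq_Ico]
    exact (Finset.sum_Ico_consecutive (fun m => bitAt d k t m i * 2^(k-1-m)) (Nat.zero_le j) hj).symm
  have hA : (∑ m ∈ Finset.range j, bitAt d k t m i * 2^(k-1-m)) = 2^(k-j) * gnat d k j t i := by
    rw [gnat, Finset.mul_sum]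
    refine Finset.sum_congr rfl fun m hm => ?_
    rw [Finset.mem_range] at hm
    rw [show k-1-m = (j-1-m) + (k-j) by omega, pow_add]
    ring
  have hR : (∑ m ∈ Finset.Ico j k, bitAt d k t m i * 2^(k-1-m)) < 2^(k-j) := by
    have h1 : (∑ m ∈ Finset.Ico j k, bitAt d k t m i * 2^(k-1-m))
        ≤ ∑ m ∈ Finset.Ico j k, 2^(k-1-m) := by
      refine Finset.sum_le_sum fun m _ => ?_
      have := bitAt_le d k t m i
      calc bitAt d k t m i * 2^(k-1-m) ≤ 1 * 2^(k-1-m) := Nat.mul_le_mul_right _ this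
        _ = 2^(k-1-m) := one_mul _
    have h2 : (∑ m ∈ Finset.Ico j k, 2^(k-1-m)) = 2^(k-j) - 1 := by
      rw [Finset.sum_Ico_eq_sum_range]
      have h3 : (∑ r ∈ Finset.range (k-j), 2^(k-1-(j+r)))
          = ∑ r ∈ Finset.range (k-j), 2^((k-j)-1-r) := by
        refine Finset.sum_congr rfl fun r hr => ?_
        rw [Finset.mem_range] at hr
        congr 1; omega
      rw [h3, Finset.sum_range_reflect (fun r => 2^r) (k-j), sum_two_pow]
    have h4 : 1 ≤ (2:ℕ)^(k-j) := Nat.one_le_two_pow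
    omega
  rw [hsplit, hA, add_comm, Nat.add_mul_div_left _ _ (Nat.pow_pos (by norm_num)),
    Nat.div_eq_of_lt hR, zero_add]

lemma anc_eq (d k j t : ℕ) (hj : j ≤ k) :
    ancestorCode d k j (leafOfIdx d k t) = fun i : Fin d => (gnat d k j t i : ℤ) := by
  funext i
  show (leafOfIdx d k t i + 2^(k-1)) / 2^(k-j) = _
  rw [leaf_add, show ((2:ℤ))^(k-j) = ((2^(k-j) : ℕ) : ℤ) by push_cast; ring,
    ← Int.natCast_div, fdiv d k j t i hj]

lemma gnat_depends (d k j t i : ℕ) (hj : j ≤ k) :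
    gnat d k j t i
      = ∑ m ∈ Finset.range j, ((t / 2^(d*(k-j))) / 2^(d*(j-1-m)+(d-1-i)) % 2) * 2^(j-1-m) := by
  refine Finset.sum_congr rfl fun m hm => ?_
  rw [Finset.mem_range] at hm
  have he : d*(k-1-m)+(d-1-i) = d*(k-j) + (d*(j-1-m)+(d-1-i)) := by
    rw [show k-1-m = (k-j)+(j-1-m) by omega, Nat.mul_add, add_assoc]
  simp only [bitAt]
  rw [he, pow_add, ← Nat.div_div_eq_div_mul]

lemma exp_id (d k j a b r : ℕ) (hj : j ≤ k) (ha : a < j) (hb : b < d) (hr : d*a+b = r) :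
    d*(k-1-(j-1-a)) + (d-1-(d-1-b)) = d*(k-j)+r := by
  rw [show k-1-(j-1-a) = (k-j)+a by omega, Nat.mul_add,
    show d-1-(d-1-b) = b by omega, add_assoc, hr]

lemma gnat_eq_iff (d k j t s : ℕ) (hd : 1 ≤ d) (hj : j ≤ k)
    (ht : t < 2^(d*k)) (hs : s < 2^(d*k)) :
    (∀ i, i < d → gnat d k j t i = gnat d k j s i) ↔
      t / 2^(d*(k-j)) = s / 2^(d*(k-j)) := by
  constructor
  · intro h
    have hbits : ∀ m, m < j → ∀ i, i < d → bitAt d k t m i = bitAt d k s m i := by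
      intro m hm i hi
      have hg := h i hi
      have hrw : ∀ r : ℕ, gnat d k j r i
          = ∑ m ∈ Finset.range j, bitAt d k r (j-1-m) i * 2^m := by
        intro r
        rw [gnat, ← Finset.sum_range_reflect]
        refine Finset.sum_congr rfl fun m hm => ?_
        rw [Finset.mem_range] at hm
        congr 2
        omega
      rw [hrw, hrw] at hg
      have := bits_inj (fun m' => bitAt_le d k t _ i) (fun m' => bitAt_le d k s _ i) hg
        (j-1-m) (by omega)
      rwa [show j-1-(j-1-m) = m by omega] at this
    have hpow : ∀ x : ℕ, x < 2^(d*k) → x / 2^(d*(k-j)) < 2^(d*j) := by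
      intro x hx
      rw [Nat.div_lt_iff_lt_mul (Nat.pow_pos (by norm_num))]
      calc x < 2^(d*k) := hx
        _ = 2^(d*j) * 2^(d*(k-j)) := by
            rw [← pow_add, ← Nat.mul_add]
            congr 2
            omega
    have hq := hpow t ht
    have hq' := hpow s hs
    rw [← q_repr hq, ← q_repr hq']
    refine Finset.sum_congr rfl fun r hr => ?_
    rw [Finset.mem_range] at hr
    have hd0 : 0 < d := hd
    have h1 : r/d < j := by
      rw [Nat.div_lt_iff_lt_mul hd0, mul_comm j d]; exact hr
    have h2 : r%d < d := Nat.mod_lt _ hd0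
    have h3 : d * (r/d) + r%d = r := Nat.div_add_mod r d
    have key : ∀ x : ℕ, x / 2^(d*(k-j)) / 2^r % 2 = bitAt d k x (j-1-r/d) (d-1-r%d) := by
      intro x
      have hexp := exp_id d k j (r/d) (r%d) r hj h1 h2 h3
      simp only [bitAt]
      rw [Nat.div_div_eq_div_mul, ← pow_add, hexp]
    have hj1 : 0 < j := Nat.lt_of_le_of_lt (Nat.zero_le _) h1
    have hm1 : j - 1 - r/d < j := lt_of_le_of_lt (Nat.sub_le _ _) (Nat.sub_lt hj1 one_pos)
    have hm2 : d - 1 - r%d < d := lt_of_le_of_lt (Nat.sub_le _ _) (Nat.sub_lt hd0 one_pos)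
    rw [key t, key s, hbits _ hm1 _ hm2]
  · intro h i hi
    rw [gnat_depends d k j t i hj, gnat_depends d k j s i hj, h]

lemma code_eq_iff (d k j t s : ℕ) (hd : 1 ≤ d) (hj : j ≤ k)
    (ht : t < 2^(d*k)) (hs : s < 2^(d*k)) :
    ancestorCode d k j (leafOfIdx d k t) = ancestorCode d k j (leafOfIdx d k s) ↔
      t / 2^(d*(k-j)) = s / 2^(d*(k-j)) := by
  rw [anc_eq d k j t hj, anc_eq d k j s hj, ← gnat_eq_iff d k j t s hd hj ht hs]
  constructor
  · intro h i hi
    exact_mod_cast congrFun h ⟨i, hi⟩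
  · intro h
    funext i
    exact_mod_cast h i i.2

lemma cd_le (d k : ℕ) (x y : Zd d) : commonDepth d k x y ≤ k := by
  refine Finset.sup_le fun ℓ hl => ?_
  rw [Finset.mem_range] at hl
  split <;> omega

lemma cd_ge (d k : ℕ) (x y : Zd d) (m : ℕ) (hm : m ≤ k)
    (h : ancestorCode d k m x = ancestorCode d k m y) : m ≤ commonDepth d k x y := by
  have := Finset.le_sup (f := fun ℓ => if ancestorCode d k ℓ x = ancestorCode d k ℓ y
      then ℓ else 0) (Finset.mem_range.mpr (show m < k+1 by omega))
  simp only [if_pos h] at this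
  exact this

lemma cd_code_eq (d k t s : ℕ) (hd : 1 ≤ d) (ht : t < 2^(d*k)) (hs : s < 2^(d*k)) :
    ancestorCode d k (commonDepth d k (leafOfIdx d k t) (leafOfIdx d k s)) (leafOfIdx d k t)
      = ancestorCode d k (commonDepth d k (leafOfIdx d k t) (leafOfIdx d k s))
        (leafOfIdx d k s) := by
  set x := leafOfIdx d k t with hx
  set y := leafOfIdx d k s with hy
  rcases Nat.eq_zero_or_pos (commonDepth d k x y) with h0 | hpos
  · rw [h0, hx, hy, code_eq_iff d k 0 t s hd (Nat.zero_le k) ht hs, Nat.sub_zero,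
      Nat.div_eq_of_lt ht, Nat.div_eq_of_lt hs]
  · obtain ⟨ℓ, hmem, hsup⟩ := Finset.exists_mem_eq_sup (Finset.range (k+1)) ⟨0, by simp⟩
      (fun ℓ => if ancestorCode d k ℓ x = ancestorCode d k ℓ y then ℓ else 0)
    by_cases hc : ancestorCode d k ℓ x = ancestorCode d k ℓ y
    · rw [if_pos hc] at hsup
      show ancestorCode d k (commonDepth d k x y) x = ancestorCode d k (commonDepth d k x y) y
      rw [show commonDepth d k x y = ℓ from hsup]
      exact hc
    · rw [if_neg hc] at hsup
      have : commonDepth d k x y = 0 := hsup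
      omega

lemma code_eq_mono (d k a b t s : ℕ) (hd : 1 ≤ d) (hb : b ≤ a) (ha : a ≤ k)
    (ht : t < 2^(d*k)) (hs : s < 2^(d*k))
    (h : ancestorCode d k a (leafOfIdx d k t) = ancestorCode d k a (leafOfIdx d k s)) :
    ancestorCode d k b (leafOfIdx d k t) = ancestorCode d k b (leafOfIdx d k s) := by
  rw [code_eq_iff d k a t s hd ha ht hs] at h
  rw [code_eq_iff d k b t s hd (le_trans hb ha) ht hs]
  have hsplit : ∀ x : ℕ, x / 2^(d*(k-b)) = x / 2^(d*(k-a)) / 2^(d*(a-b)) := by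
    intro x
    rw [show d*(k-b) = d*(k-a)+d*(a-b) by rw [← Nat.mul_add]; congr 1; omega,
      pow_add, ← Nat.div_div_eq_div_mul]
  rw [hsplit t, hsplit s, h]

lemma L1 (d k i : ℕ) (hd : 1 ≤ d) (hik : i + 1 ≤ 2^(d*k)) (j : ℕ)
    (hj : j + 1 ≤ commonDepth d k (leafOfIdx d k i) (leafOfIdx d k (i-1))) :
    ancestorCode d k (j+1) (leafOfIdx d k i)
      = ancestorCode d k (j+1) (leafOfIdx d k (i-1)) := by
  have ht : i < 2^(d*k) := by omega
  have hs : i-1 < 2^(d*k) := by omega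
  have hL := cd_le d k (leafOfIdx d k i) (leafOfIdx d k (i-1))
  exact code_eq_mono d k _ (j+1) i (i-1) hd hj hL ht hs (cd_code_eq d k i (i-1) hd ht hs)

lemma L2 (d k i t : ℕ) (hd : 1 ≤ d) (hik : i + 1 ≤ 2^(d*k)) (j : ℕ)
    (hjk : j + 1 ≤ k)
    (hl : commonDepth d k (leafOfIdx d k i) (leafOfIdx d k (i-1)) ≤ j)
    (hti : t < i)
    (h : ancestorCode d k (j+1) (leafOfIdx d k t) = ancestorCode d k (j+1) (leafOfIdx d k i)) :
    False := by
  have hti' : t < 2^(d*k) := by omega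
  have hii : i < 2^(d*k) := by omega
  have hs : i - 1 < 2^(d*k) := by omega
  rw [code_eq_iff d k (j+1) t i hd hjk hti' hii] at h
  have h1 : t / 2^(d*(k-(j+1))) ≤ (i-1) / 2^(d*(k-(j+1))) := Nat.div_le_div_right (by omega)
  have h2 : (i-1) / 2^(d*(k-(j+1))) ≤ i / 2^(d*(k-(j+1))) := Nat.div_le_div_right (by omega)
  have heq : i / 2^(d*(k-(j+1))) = (i-1)/2^(d*(k-(j+1))) := by omega
  have hcode := (code_eq_iff d k (j+1) i (i-1) hd hjk hii hs).mpr heq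
  have := cd_ge d k _ _ (j+1) hjk hcode
  omega

/-- For Bernoulli bond percolation on the complete `2^d`-ary tree of
height `k`, the sequence `(Y_i)` of root-to-leaf edge-state vectors, with leaves listed in
lexicographic order (`Y_i = leafPath d k (i-1)` for the `1`-indexed `i`), is a Markov chain:
for `2 ≤ i ≤ 2^(dk) - 1`, `Y_{i+1}` is conditionally independent of `(Y_1, …, Y_{i-1})`
given `Y_i`. -/
theorem statement18 (d k : ℕ) (hd : 1 ≤ d) (hk : 1 ≤ k) (p : ℝ) (hp : p ∈ Set.Icc (0:ℝ) 1)
    (Ω : Type) (mΩ : MeasurableSpace Ω) (P : Measure Ω) (hP : IsProbabilityMeasure P)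
    (X : TreeEdge d k → Ω → Bool) (hmeas : ∀ e, Measurable (X e))
    (hindep : iIndepFun X P)
    (hmarg : ∀ e, P {ω | X e ω = true} = ENNReal.ofReal p)
    (i : ℕ) (hi : 2 ≤ i) (hi' : i + 1 ≤ 2 ^ (d * k))
    (v u : Fin k → Bool) (w : ℕ → Fin k → Bool) :
    P ({ω | leafPath d k i (fun e => X e ω) = v} ∩
        {ω | ∀ s, 1 ≤ s → s ≤ i - 1 → leafPath d k (s - 1) (fun e => X e ω) = w s} ∩
        {ω | leafPath d k (i - 1) (fun e => X e ω) = u}) *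
      P {ω | leafPath d k (i - 1) (fun e => X e ω) = u} =
    P ({ω | leafPath d k i (fun e => X e ω) = v} ∩
        {ω | leafPath d k (i - 1) (fun e => X e ω) = u}) *
      P ({ω | ∀ s, 1 ≤ s → s ≤ i - 1 → leafPath d k (s - 1) (fun e => X e ω) = w s} ∩
        {ω | leafPath d k (i - 1) (fun e => X e ω) = u}) := by
  set L := commonDepth d k (leafOfIdx d k i) (leafOfIdx d k (i-1)) with hL
  set cI : Fin k → Zd d := fun j => ancestorCode d k ((j:ℕ)+1) (leafOfIdx d k i) with hcI
  set cP : ℕ → Fin k → Zd d :=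
    fun t j => ancestorCode d k ((j:ℕ)+1) (leafOfIdx d k t) with hcP
  set A : Set Ω := {ω | leafPath d k i (fun e => X e ω) = v} with hA
  set B : Set Ω :=
    {ω | ∀ s, 1 ≤ s → s ≤ i - 1 → leafPath d k (s - 1) (fun e => X e ω) = w s} with hB
  set C : Set Ω := {ω | leafPath d k (i - 1) (fun e => X e ω) = u} with hC
  -- the key geometric facts
  have hL1 : ∀ j : Fin k, (j:ℕ) < L → cI j = cP (i-1) j :=
    fun j hj => L1 d k i hd hi' j hj
  by_cases hvu : ∀ j : Fin k, (j:ℕ) < L → v j = u j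
  case neg =>
    push_neg at hvu
    obtain ⟨j, hjl, hne⟩ := hvu
    have hAC : A ∩ C = ∅ := by
      rw [Set.eq_empty_iff_forall_notMem]
      rintro ω ⟨hAω, hCω⟩
      have e1 : X (j, cI j) ω = v j := congrFun hAω j
      have e2 : X (j, cP (i-1) j) ω = u j := congrFun hCω j
      rw [hL1 j hjl, e2] at e1
      exact hne e1.symm
    have hABC : A ∩ B ∩ C = ∅ := by
      rw [Set.eq_empty_iff_forall_notMem]
      rintro ω ⟨⟨hAω, _⟩, hCω⟩
      exact Set.eq_empty_iff_forall_notMem.mp hAC ω ⟨hAω, hCω⟩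
    rw [hABC, hAC, measure_empty, zero_mul, zero_mul]
  case pos =>
    -- the edge index sets
    set S : Finset (TreeEdge d k) :=
      Finset.image (fun j : Fin k => ((j : Fin k), cI j))
        (Finset.univ.filter (fun j : Fin k => L ≤ (j:ℕ))) with hS
    set T : Finset (TreeEdge d k) :=
      Finset.image (fun q : ℕ × Fin k => (q.2, cP q.1 q.2))
        ((Finset.range i) ×ˢ Finset.univ) with hT
    have hdisj : Disjoint S T := by
      rw [Finset.disjoint_left]
      rintro e heS heT
      rw [hS, Finset.mem_image] at heS
      rw [hT, Finset.mem_image] at heT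
      obtain ⟨j, hj, rfl⟩ := heS
      obtain ⟨⟨t, j'⟩, hq, heq⟩ := heT
      rw [Finset.mem_filter] at hj
      rw [Finset.mem_product, Finset.mem_range] at hq
      have hj2 : j = j' := (congrArg Prod.fst heq).symm
      subst hj2
      have hcode : cP t j = cI j := congrArg Prod.snd heq
      exact L2 d k i t hd hi' (j:ℕ) j.2 hj.2 hq.1 hcode
    set FS : Ω → (↥S → Bool) := fun ω e => X e ω with hFS
    set FT : Ω → (↥T → Bool) := fun ω e => X e ω with hFT
    have hIndep : IndepFun FS FT P := hindep.indepFun_finset S T hdisj hmeas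
    have hmul : ∀ (MS : Set (↥S → Bool)) (MT : Set (↥T → Bool)),
        P (FS ⁻¹' MS ∩ FT ⁻¹' MT) = P (FS ⁻¹' MS) * P (FT ⁻¹' MT) := by
      intro MS MT
      exact hIndep.measure_inter_preimage_eq_mul MS MT
        ((Set.to_countable MS).measurableSet) ((Set.to_countable MT).measurableSet)
    -- descriptions of the events as preimages
    set A2 : Set Ω := {ω | ∀ j : Fin k, L ≤ (j:ℕ) → X (j, cI j) ω = v j} with hA2
    set MS : Set (↥S → Bool) :=
      {g | ∀ e : ↥S, ∀ j : Fin k, L ≤ (j:ℕ) → (e : TreeEdge d k) = (j, cI j) → g e = v j}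
      with hMS
    have hA2S : A2 = FS ⁻¹' MS := by
      ext ω
      constructor
      · intro h e j hlj hej
        show X (e : TreeEdge d k) ω = v j
        rw [hej]
        exact h j hlj
      · intro h j hlj
        have heS : ((j : Fin k), cI j) ∈ S := by
          rw [hS, Finset.mem_image]
          exact ⟨j, by simp [hlj], rfl⟩
        exact h ⟨_, heS⟩ j hlj rfl
    set MT : Set (↥T → Bool) :=
      {g | (∀ e : ↥T, ∀ s, 1 ≤ s → s ≤ i-1 → ∀ j : Fin k,
              (e : TreeEdge d k) = (j, cP (s-1) j) → g e = w s j) ∧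
           (∀ e : ↥T, ∀ j : Fin k, (e : TreeEdge d k) = (j, cP (i-1) j) → g e = u j)}
      with hMT
    set MC : Set (↥T → Bool) :=
      {g | ∀ e : ↥T, ∀ j : Fin k, (e : TreeEdge d k) = (j, cP (i-1) j) → g e = u j} with hMC
    have hmemT : ∀ (t : ℕ), t < i → ∀ j : Fin k, ((j : Fin k), cP t j) ∈ T := by
      intro t ht j
      rw [hT, Finset.mem_image]
      exact ⟨(t, j), by simp [Finset.mem_product, Finset.mem_range, ht], rfl⟩
    have hBCT : B ∩ C = FT ⁻¹' MT := by
      ext ω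
      constructor
      · rintro ⟨hBω, hCω⟩
        constructor
        · intro e s h1 h2 j hej
          show X (e : TreeEdge d k) ω = w s j
          rw [hej]
          exact congrFun (hBω s h1 h2) j
        · intro e j hej
          show X (e : TreeEdge d k) ω = u j
          rw [hej]
          exact congrFun hCω j
      · rintro ⟨h1, h2⟩
        constructor
        · intro s hs1 hs2
          funext j
          exact h1 ⟨_, hmemT (s-1) (by omega) j⟩ s hs1 hs2 j rfl
        · funext j
          exact h2 ⟨_, hmemT (i-1) (by omega) j⟩ j rfl
    have hCT : C = FT ⁻¹' MC := by
      ext ω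
      constructor
      · intro hCω e j hej
        show X (e : TreeEdge d k) ω = u j
        rw [hej]
        exact congrFun hCω j
      · intro h
        funext j
        exact h ⟨_, hmemT (i-1) (by omega) j⟩ j rfl
    -- replacing A by A2
    have hAC : A ∩ C = A2 ∩ C := by
      ext ω
      constructor
      · rintro ⟨hAω, hCω⟩
        exact ⟨fun j _ => congrFun hAω j, hCω⟩
      · rintro ⟨hA2ω, hCω⟩
        refine ⟨?_, hCω⟩
        funext j
        show X (j, cI j) ω = v j
        by_cases hj : L ≤ (j:ℕ)
        · exact hA2ω j hj
        · push_neg at hj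
          rw [hL1 j hj, show X (j, cP (i-1) j) ω = u j from congrFun hCω j]
          exact (hvu j hj).symm
    have hABC : A ∩ B ∩ C = A2 ∩ (B ∩ C) := by
      rw [Set.inter_right_comm, hAC, Set.inter_right_comm, Set.inter_assoc]
    rw [hABC, hAC, hBCT, hCT, hA2S, hmul MS MT, hmul MS MC]
    ring
end
end

section
/- Let d ≥ 1 and α, β ∈ (0, d). Let R be a random subset of ℤ^d and suppose there are constants 0 < c ≤ C such that for every finite set B ⊆ ℤ^d containing the origin and every x ∈ ℤ^d with |x| ≥ 2·diam(B), c·|x|^{−β}·Cap_α(B) ≤ P(R ∩ (x + B) ≠ ∅) ≤ C·|x|^{−β}·Cap_α(B). For n ≥ 1 let Ψ_n := ([−2^{n−1}, 2^{n−1}]^d \ [−2^{n−2}, 2^{n−2}]^d) ∩ ℤ^d. Then there exist constants 0 < c' ≤ C' depending only on d, α, β, c, C such that for every n ≥ 1 and every nonempty finite set B ⊆ Ψ_n, c'·2^{−nβ}·Cap_α(B) ≤ P(R ∩ B ≠ ∅) ≤ C'·2^{−nβ}·Cap_α(B). -/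
open MeasureTheory ProbabilityTheory Set Pointwise
open scoped ENNReal Classical

noncomputable section

/-- The σ-algebra on subsets of `ℤ^d` generated by the events `{S | x ∈ S}`, `x ∈ ℤ^d`. -/
def setSigma (d : ℕ) : MeasurableSpace (Set (Zd d)) :=
  MeasurableSpace.generateFrom {C | ∃ x : Zd d, C = {S : Set (Zd d) | x ∈ S}}

/-- The annulus `Ψ_n = ([-2^(n-1), 2^(n-1)]^d \ [-2^(n-2), 2^(n-2)]^d) ∩ ℤ^d`
(with the real-valued bound `2^(n-2)` so that the case `n = 1` is handled correctly). -/
def annulus (d n : ℕ) : Set (Zd d) :=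
  {x | (∀ i, |(x i : ℝ)| ≤ (2:ℝ) ^ ((n : ℤ) - 1)) ∧ ¬ ∀ i, |(x i : ℝ)| ≤ (2:ℝ) ^ ((n : ℤ) - 2)}

namespace S19
variable {d : ℕ}

lemma zdist_nonneg (x y : Zd d) : 0 ≤ zdist x y := Real.sqrt_nonneg _

lemma zdist_self (x : Zd d) : zdist x x = 0 := by simp [zdist]

lemma zdist_add (v x y : Zd d) : zdist (v + x) (v + y) = zdist x y := by
  unfold zdist
  congr 1
  apply Finset.sum_congr rfl
  intro i _
  have : (v + x) i - (v + y) i = x i - y i := by simp [Pi.add_apply]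
  rw [this]

def distSet (A : Set (Zd d)) : Set ℝ := {r : ℝ | ∃ x ∈ A, ∃ y ∈ A, r = zdist x y}

lemma zdiam_eq (A : Set (Zd d)) : zdiam A = sSup (distSet A) := rfl

lemma distSet_finite {A : Set (Zd d)} (h : A.Finite) : (distSet A).Finite := by
  have : distSet A ⊆ (fun p : Zd d × Zd d => zdist p.1 p.2) '' (A ×ˢ A) := by
    rintro r ⟨x, hx, y, hy, rfl⟩
    exact ⟨(x, y), ⟨hx, hy⟩, rfl⟩
  exact ((h.prod h).image _).subset this

lemma zdist_le_zdiam {A : Set (Zd d)} (h : A.Finite) {x y : Zd d} (hx : x ∈ A) (hy : y ∈ A) :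
    zdist x y ≤ zdiam A :=
  le_csSup (distSet_finite h).bddAbove ⟨x, hx, y, hy, rfl⟩

lemma zdiam_vadd (v : Zd d) (A : Set (Zd d)) : zdiam (v +ᵥ A) = zdiam A := by
  unfold zdiam
  congr 1
  ext r
  constructor
  · rintro ⟨x, hx, y, hy, rfl⟩
    rw [Set.mem_vadd_set] at hx hy
    obtain ⟨x', hx', rfl⟩ := hx
    obtain ⟨y', hy', rfl⟩ := hy
    refine ⟨x', hx', y', hy', ?_⟩
    simpa [vadd_eq_add] using zdist_add v x' y'
  · rintro ⟨x, hx, y, hy, rfl⟩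
    exact ⟨v + x, ⟨x, hx, rfl⟩, v + y, ⟨y, hy, rfl⟩, (zdist_add v x y).symm⟩

lemma zdist_le_of_coords {x y : Zd d} {r : ℝ} (hr : 0 ≤ r)
    (h : ∀ i, |((x i - y i : ℤ) : ℝ)| ≤ r) : zdist x y ≤ Real.sqrt d * r := by
  have h1 : ∑ i, ((x i - y i : ℤ) : ℝ) ^ 2 ≤ ∑ _i : Fin d, r ^ 2 := by
    apply Finset.sum_le_sum
    intro i _
    calc ((x i - y i : ℤ) : ℝ) ^ 2 = |((x i - y i : ℤ) : ℝ)| ^ 2 := (sq_abs _).symm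
    _ ≤ r ^ 2 := by nlinarith [h i, abs_nonneg ((x i - y i : ℤ) : ℝ)]
  calc zdist x y ≤ Real.sqrt (∑ _i : Fin d, r ^ 2) := Real.sqrt_le_sqrt h1
  _ = Real.sqrt (d * r ^ 2) := by simp [Finset.sum_const, mul_comm]
  _ = Real.sqrt d * r := by
      rw [Real.sqrt_mul (by positivity), Real.sqrt_sq hr]

lemma abs_le_znorm (x : Zd d) (i : Fin d) : |((x i : ℤ) : ℝ)| ≤ znorm x := by
  have h1 : ((x i : ℤ) : ℝ) ^ 2 ≤ ∑ j, ((x j : ℤ) : ℝ) ^ 2 :=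
    Finset.single_le_sum (f := fun j => ((x j : ℤ) : ℝ) ^ 2) (fun j _ => sq_nonneg _)
      (Finset.mem_univ i)
  calc |((x i : ℤ) : ℝ)| = Real.sqrt (((x i : ℤ) : ℝ) ^ 2) := (Real.sqrt_sq_eq_abs _).symm
  _ ≤ znorm x := Real.sqrt_le_sqrt h1

lemma znorm_le_of_coords {x : Zd d} {r : ℝ} (hr : 0 ≤ r)
    (h : ∀ i, |((x i : ℤ) : ℝ)| ≤ r) : znorm x ≤ Real.sqrt d * r := by
  have h1 : ∑ i, ((x i : ℤ) : ℝ) ^ 2 ≤ ∑ _i : Fin d, r ^ 2 := by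
    apply Finset.sum_le_sum
    intro i _
    calc ((x i : ℤ) : ℝ) ^ 2 = |((x i : ℤ) : ℝ)| ^ 2 := (sq_abs _).symm
    _ ≤ r ^ 2 := by nlinarith [h i, abs_nonneg ((x i : ℤ) : ℝ)]
  calc znorm x ≤ Real.sqrt (∑ _i : Fin d, r ^ 2) := Real.sqrt_le_sqrt h1
  _ = Real.sqrt (d * r ^ 2) := by simp [Finset.sum_const, mul_comm]
  _ = Real.sqrt d * r := by rw [Real.sqrt_mul (by positivity), Real.sqrt_sq hr]

lemma rpow_neg_anti {a b γ : ℝ} (ha : 0 < a) (hab : a ≤ b) (hγ : 0 ≤ γ) :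
    b ^ (-γ) ≤ a ^ (-γ) := by
  rw [Real.rpow_neg ha.le, Real.rpow_neg (by linarith)]
  exact inv_anti₀ (Real.rpow_pos_of_pos ha γ) (Real.rpow_le_rpow ha.le hab hγ)

lemma tsum_energy_eq (μ : Zd d → ℝ) (k : Zd d → Zd d → ℝ) (s : Finset (Zd d))
    (hs : ∀ x ∉ s, μ x = 0) :
    ∑' x, ∑' y, μ x * μ y * k x y = ∑ x ∈ s, ∑ y ∈ s, μ x * μ y * k x y := by
  have hin : ∀ x, ∑' y, μ x * μ y * k x y = ∑ y ∈ s, μ x * μ y * k x y :=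
    fun x => tsum_eq_sum (fun y hy => by rw [hs y hy]; ring)
  rw [tsum_congr hin]
  exact tsum_eq_sum (fun x hx => Finset.sum_eq_zero (fun y _ => by rw [hs x hx]; ring))


section Energies
variable {α : ℝ} {A : Set (Zd d)}

lemma kern_nonneg (x y : Zd d) : 0 ≤ (max (zdist x y) 1 : ℝ) ^ (-α) :=
  Real.rpow_nonneg (le_trans zero_le_one (le_max_right _ _)) _

lemma one_mem_energies (hne : A.Nonempty) : (1:ℝ) ∈ discEnergies α A := by
  obtain ⟨a, ha⟩ := hne
  refine ⟨fun x => if x = a then 1 else 0, fun x => by positivity,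
    fun x hx => if_neg (by rintro rfl; exact hx ha), hasSum_ite_eq a 1, ?_⟩
  rw [tsum_energy_eq _ _ {a} (fun x hx => if_neg (by simpa using hx))]
  simp [zdist_self, Real.one_rpow]

lemma energies_lower (hA : A.Finite) (hα : 0 ≤ α) {E : ℝ} (hE : E ∈ discEnergies α A) :
    (max (zdiam A) 1) ^ (-α) ≤ E := by
  obtain ⟨μ, hμ0, hμsupp, hμsum, rfl⟩ := hE
  set s := hA.toFinset with hs
  have hvan : ∀ x ∉ s, μ x = 0 := fun x hx => hμsupp x (by simpa [hs] using hx)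
  have hsum1 : ∑ x ∈ s, μ x = 1 := (hasSum_sum_of_ne_finset_zero hvan).unique hμsum
  rw [tsum_energy_eq _ _ s hvan]
  have hterm : ∀ x ∈ s, ∀ y ∈ s,
      μ x * μ y * (max (zdiam A) 1) ^ (-α) ≤ μ x * μ y * (max (zdist x y) 1) ^ (-α) := by
    intro x hx y hy
    have hxy : zdist x y ≤ zdiam A :=
      zdist_le_zdiam hA (by simpa [hs] using hx) (by simpa [hs] using hy)
    have h1 : max (zdist x y) 1 ≤ max (zdiam A) 1 := max_le_max hxy le_rfl
    have h2 : (0:ℝ) < max (zdist x y) 1 := lt_of_lt_of_le zero_lt_one (le_max_right _ _)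
    exact mul_le_mul_of_nonneg_left (rpow_neg_anti h2 h1 hα)
      (mul_nonneg (hμ0 x) (hμ0 y))
  calc (max (zdiam A) 1) ^ (-α)
      = ∑ x ∈ s, ∑ y ∈ s, μ x * μ y * (max (zdiam A) 1) ^ (-α) := by
        simp only [← Finset.sum_mul, ← Finset.mul_sum]
        rw [hsum1]; ring
  _ ≤ ∑ x ∈ s, ∑ y ∈ s, μ x * μ y * (max (zdist x y) 1) ^ (-α) :=
      Finset.sum_le_sum (fun x hx => Finset.sum_le_sum (fun y hy => hterm x hx y hy))

lemma energies_bddBelow (hA : A.Finite) (hα : 0 ≤ α) : BddBelow (discEnergies α A) :=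
  ⟨_, fun _ hE => energies_lower hA hα hE⟩

lemma sInf_energies_le_one (hA : A.Finite) (hα : 0 ≤ α) (hne : A.Nonempty) :
    sInf (discEnergies α A) ≤ 1 :=
  csInf_le (energies_bddBelow hA hα) (one_mem_energies hne)

lemma sInf_energies_lb (hA : A.Finite) (hα : 0 ≤ α) (hne : A.Nonempty) :
    (max (zdiam A) 1) ^ (-α) ≤ sInf (discEnergies α A) :=
  le_csInf ⟨1, one_mem_energies hne⟩ (fun _ hE => energies_lower hA hα hE)

lemma sInf_energies_pos (hA : A.Finite) (hα : 0 ≤ α) (hne : A.Nonempty) :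
    0 < sInf (discEnergies α A) :=
  lt_of_lt_of_le (Real.rpow_pos_of_pos (lt_of_lt_of_le zero_lt_one (le_max_right _ _)) _)
    (sInf_energies_lb hA hα hne)

lemma discCap_nonneg (hA : A.Finite) (hα : 0 ≤ α) (hne : A.Nonempty) :
    0 ≤ discCap α A :=
  inv_nonneg.mpr (sInf_energies_pos hA hα hne).le

lemma discCap_mono {A' : Set (Zd d)} (hA' : A'.Finite) (hα : 0 ≤ α) (hne : A.Nonempty)
    (hsub : A ⊆ A') : discCap α A ≤ discCap α A' := by
  have hsubE : discEnergies α A ⊆ discEnergies α A' := by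
    rintro E ⟨μ, h0, hsupp, hsum, rfl⟩
    exact ⟨μ, h0, fun x hx => hsupp x (fun h => hx (hsub h)), hsum, rfl⟩
  have h1 : sInf (discEnergies α A') ≤ sInf (discEnergies α A) :=
    csInf_le_csInf (energies_bddBelow hA' hα) ⟨1, one_mem_energies hne⟩ hsubE
  exact inv_anti₀ (sInf_energies_pos hA' hα (hne.mono hsub)) h1

lemma energies_vadd_subset (hA : A.Finite) (v : Zd d) :
    discEnergies α A ⊆ discEnergies α (v +ᵥ A) := by
  rintro E ⟨μ, h0, hsupp, hsum, rfl⟩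
  classical
  set s := hA.toFinset with hs
  have hvan : ∀ x ∉ s, μ x = 0 := fun x hx => hsupp x (by simpa [hs] using hx)
  have hsum1 : ∑ x ∈ s, μ x = 1 := (hasSum_sum_of_ne_finset_zero hvan).unique hsum
  set e : Zd d ↪ Zd d := addLeftEmbedding v with he
  set ν : Zd d → ℝ := fun x => μ (-v + x) with hν
  have hνadd : ∀ x, ν (v + x) = μ x := fun x => by simp [hν, neg_add_cancel_left]
  have hν_van : ∀ x ∉ s.map e, ν x = 0 := by
    intro x hx
    by_contra hne0
    have hmem : -v + x ∈ s := by
      by_contra hmem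
      exact hne0 (hvan _ hmem)
    apply hx
    rw [Finset.mem_map]
    exact ⟨-v + x, hmem, by simp [he, addLeftEmbedding, add_neg_cancel_left]⟩
  have hνsum1 : ∑ x ∈ s.map e, ν x = 1 := by
    rw [Finset.sum_map]
    simpa [he, addLeftEmbedding, hνadd] using hsum1
  refine ⟨ν, fun x => h0 _, ?_, ?_, ?_⟩
  · intro x hx
    apply hsupp
    intro hmem
    exact hx ⟨-v + x, hmem, by simp [vadd_eq_add, add_neg_cancel_left]⟩
  · have := hasSum_sum_of_ne_finset_zero (L := SummationFilter.unconditional _) hν_van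
    rwa [hνsum1] at this
  · rw [tsum_energy_eq μ _ s hvan, tsum_energy_eq ν _ (s.map e) hν_van]
    rw [Finset.sum_map]
    apply Finset.sum_congr rfl
    intro x _
    rw [Finset.sum_map]
    apply Finset.sum_congr rfl
    intro y _
    have hex : e x = v + x := by simp [he, addLeftEmbedding_apply]
    have hey : e y = v + y := by simp [he, addLeftEmbedding_apply]
    rw [hex, hey, hνadd, hνadd, zdist_add]

lemma vadd_finite (hA : A.Finite) (v : Zd d) : (v +ᵥ A).Finite := by
  rw [← Set.image_vadd]
  exact hA.image _

lemma energies_vadd (hA : A.Finite) (v : Zd d) :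
    discEnergies α (v +ᵥ A) = discEnergies α A := by
  apply le_antisymm
  · have h := energies_vadd_subset (α := α) (vadd_finite hA v) (-v)
    rwa [vadd_vadd, neg_add_cancel, zero_vadd] at h
  · exact energies_vadd_subset hA v

lemma discCap_vadd (hA : A.Finite) (v : Zd d) : discCap α (v +ᵥ A) = discCap α A := by
  unfold discCap
  rw [energies_vadd hA v]

end Energies

lemma int_close (s a b : ℤ) (hs0 : 0 < s) (hab : a / s = b / s) : |a - b| ≤ s - 1 := by
  have h1 := Int.mul_ediv_add_emod a s
  have h2 := Int.mul_ediv_add_emod b s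
  have h3 := Int.emod_nonneg a hs0.ne'
  have h4 := Int.emod_lt_of_pos a hs0
  have h5 := Int.emod_nonneg b hs0.ne'
  have h6 := Int.emod_lt_of_pos b hs0
  have h7 : s * (a / s) = s * (b / s) := by rw [hab]
  have h8 : a - b = a % s - b % s := by linarith
  rw [abs_le]
  constructor <;> linarith

lemma exists_good_piece {α : ℝ} (hα : 0 ≤ α) {B : Set (Zd d)} (hB : B.Finite)
    (hBne : B.Nonempty) {ι : Type} {t : Finset ι} {A : ι → Set (Zd d)}
    (hsub : ∀ i ∈ t, A i ⊆ B) (hne : ∀ i ∈ t, (A i).Nonempty)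
    (hcov : ∀ x ∈ B, ∃ i ∈ t, x ∈ A i) (htne : t.Nonempty) :
    ∃ i ∈ t, discCap α B ≤ (t.card : ℝ) ^ 2 * discCap α (A i) := by
  classical
  set k : Zd d → Zd d → ℝ := fun x y => (max (zdist x y) 1) ^ (-α) with hk
  have hk0 : ∀ x y, 0 ≤ k x y := fun x y => kern_nonneg x y
  set Efn : ι → ℝ := fun i => sInf (discEnergies α (A i)) with hEfn
  obtain ⟨i₀, hi₀t, hi₀min⟩ := t.exists_min_image Efn htne
  have hAfin : ∀ i ∈ t, (A i).Finite := fun i hi => hB.subset (hsub i hi)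
  have hEi₀pos : 0 < Efn i₀ := sInf_energies_pos (hAfin i₀ hi₀t) hα (hne i₀ hi₀t)
  have hcard_pos : (0:ℝ) < (t.card : ℝ) := by
    exact_mod_cast Finset.card_pos.mpr htne
  have key : ∀ E ∈ discEnergies α B, Efn i₀ / (t.card : ℝ) ^ 2 ≤ E := by
    rintro E ⟨μ, hμ0, hμsupp, hμsum, rfl⟩
    set sB := hB.toFinset with hsB
    have hvan : ∀ x ∉ sB, μ x = 0 := fun x hx => hμsupp x (by simpa [hsB] using hx)
    have hsum1 : ∑ x ∈ sB, μ x = 1 := (hasSum_sum_of_ne_finset_zero hvan).unique hμsum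
    set si : ι → Finset (Zd d) := fun i => sB.filter (· ∈ A i) with hsi
    set a : ι → ℝ := fun i => ∑ x ∈ si i, μ x with ha
    have ha0 : ∀ i, 0 ≤ a i := fun i => Finset.sum_nonneg (fun x _ => hμ0 x)
    have hsum_ge : 1 ≤ ∑ i ∈ t, a i := by
      have step1 : ∀ x ∈ sB, μ x ≤ ∑ i ∈ t, (if x ∈ A i then μ x else 0) := by
        intro x hx
        obtain ⟨i, hit, hxi⟩ := hcov x (by simpa [hsB] using hx)
        have := Finset.single_le_sum (f := fun i => if x ∈ A i then μ x else 0)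
          (fun j _ => by by_cases hxj : x ∈ A j <;> simp [hxj, hμ0 x]) hit
        simpa [hxi] using this
      calc (1:ℝ) = ∑ x ∈ sB, μ x := hsum1.symm
      _ ≤ ∑ x ∈ sB, ∑ i ∈ t, (if x ∈ A i then μ x else 0) := Finset.sum_le_sum step1
      _ = ∑ i ∈ t, a i := by
          rw [Finset.sum_comm]
          apply Finset.sum_congr rfl
          intro i _
          rw [ha, hsi]
          simp [Finset.sum_filter]
    obtain ⟨j, hjt, hj⟩ : ∃ j ∈ t, 1 / (t.card : ℝ) ≤ a j := by
      by_contra h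
      push_neg at h
      have hlt : ∑ i ∈ t, a i < ∑ i ∈ t, 1 / (t.card : ℝ) :=
        Finset.sum_lt_sum_of_nonempty htne h
      rw [Finset.sum_const, nsmul_eq_mul, mul_one_div, div_self hcard_pos.ne'] at hlt
      linarith
    have haj : 0 < a j := lt_of_lt_of_le (by positivity) hj
    set ν : Zd d → ℝ := fun x => (if x ∈ A j then μ x else 0) / a j with hν
    have hν_van : ∀ x ∉ si j, ν x = 0 := by
      intro x hx
      simp only [hν]
      by_cases hxA : x ∈ A j
      · exfalso
        apply hx
        rw [hsi, Finset.mem_filter]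
        exact ⟨by simp [hsB, hB.mem_toFinset]; exact hsub j hjt hxA, hxA⟩
      · simp [hxA]
    have hν_filter : ∀ x ∈ si j, ν x = μ x / a j := by
      intro x hx
      simp only [hν]
      rw [if_pos (Finset.mem_filter.mp hx).2]
    have hνsum1 : ∑ x ∈ si j, ν x = 1 := by
      rw [Finset.sum_congr rfl hν_filter, ← Finset.sum_div]
      exact div_self haj.ne'
    have hνmem : (∑' x, ∑' y, ν x * ν y * k x y) ∈ discEnergies α (A j) := by
      have hν0 : ∀ x, 0 ≤ ν x := by
        intro x
        simp only [hν]
        apply div_nonneg _ haj.le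
        by_cases hxA : x ∈ A j <;> simp [hxA, hμ0 x]
      refine ⟨ν, hν0, ?_, ?_, rfl⟩
      · intro x hx
        simp only [hν]
        rw [if_neg hx, zero_div]
      · have := hasSum_sum_of_ne_finset_zero (L := SummationFilter.unconditional _) hν_van
        rwa [hνsum1] at this
    have hEj_le : Efn j ≤ ∑' x, ∑' y, ν x * ν y * k x y :=
      csInf_le (energies_bddBelow (hAfin j hjt) hα) hνmem
    have hνeq : ∑' x, ∑' y, ν x * ν y * k x y
        = (∑ x ∈ si j, ∑ y ∈ si j, μ x * μ y * k x y) / (a j) ^ 2 := by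
      rw [tsum_energy_eq ν k (si j) hν_van]
      rw [Finset.sum_div]
      apply Finset.sum_congr rfl
      intro x hx
      rw [Finset.sum_div]
      apply Finset.sum_congr rfl
      intro y hy
      rw [hν_filter x hx, hν_filter y hy]
      ring
    have hterm0 : ∀ x y, 0 ≤ μ x * μ y * k x y :=
      fun x y => mul_nonneg (mul_nonneg (hμ0 x) (hμ0 y)) (hk0 x y)
    have hmono : ∑ x ∈ si j, ∑ y ∈ si j, μ x * μ y * k x y
        ≤ ∑ x ∈ sB, ∑ y ∈ sB, μ x * μ y * k x y := by
      have hsub' : si j ⊆ sB := Finset.filter_subset _ _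
      calc ∑ x ∈ si j, ∑ y ∈ si j, μ x * μ y * k x y
          ≤ ∑ x ∈ si j, ∑ y ∈ sB, μ x * μ y * k x y :=
            Finset.sum_le_sum (fun x _ =>
              Finset.sum_le_sum_of_subset_of_nonneg hsub' (fun y _ _ => hterm0 x y))
      _ ≤ ∑ x ∈ sB, ∑ y ∈ sB, μ x * μ y * k x y :=
            Finset.sum_le_sum_of_subset_of_nonneg hsub'
              (fun x _ _ => Finset.sum_nonneg (fun y _ => hterm0 x y))
    have hfull : ∑' x, ∑' y, μ x * μ y * k x y
        = ∑ x ∈ sB, ∑ y ∈ sB, μ x * μ y * k x y := tsum_energy_eq μ k sB hvan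
    have hEj0 : 0 ≤ Efn j := (sInf_energies_pos (hAfin j hjt) hα (hne j hjt)).le
    calc Efn i₀ / (t.card : ℝ) ^ 2 ≤ Efn j / (t.card : ℝ) ^ 2 :=
          (div_le_div_iff_of_pos_right (by positivity)).mpr (hi₀min j hjt)
    _ ≤ Efn j * (a j) ^ 2 := by
          have h2 : (1 / (t.card : ℝ)) ^ 2 ≤ (a j) ^ 2 := pow_le_pow_left₀ (by positivity) hj 2
          have h3 : Efn j / (t.card : ℝ) ^ 2 = Efn j * (1 / (t.card : ℝ)) ^ 2 := by
            field_simp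
          rw [h3]
          exact mul_le_mul_of_nonneg_left h2 hEj0
    _ ≤ (∑' x, ∑' y, ν x * ν y * k x y) * (a j) ^ 2 :=
          mul_le_mul_of_nonneg_right hEj_le (by positivity)
    _ = ∑ x ∈ si j, ∑ y ∈ si j, μ x * μ y * k x y := by
          rw [hνeq, div_mul_cancel₀]
          positivity
    _ ≤ ∑ x ∈ sB, ∑ y ∈ sB, μ x * μ y * k x y := hmono
    _ = ∑' x, ∑' y, μ x * μ y * k x y := hfull.symm
  have hq : 0 < Efn i₀ / (t.card : ℝ) ^ 2 := by positivity
  have hsInfB : Efn i₀ / (t.card : ℝ) ^ 2 ≤ sInf (discEnergies α B) :=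
    le_csInf ⟨1, one_mem_energies hBne⟩ key
  refine ⟨i₀, hi₀t, ?_⟩
  unfold discCap
  calc (sInf (discEnergies α B))⁻¹ ≤ (Efn i₀ / (t.card : ℝ) ^ 2)⁻¹ :=
        inv_anti₀ hq hsInfB
  _ = (t.card : ℝ) ^ 2 * (Efn i₀)⁻¹ := by
        field_simp
  _ = (t.card : ℝ) ^ 2 * (sInf (discEnergies α (A i₀)))⁻¹ := rfl

end S19

open S19

set_option maxHeartbeats 4000000 in
/-- If the hitting probabilities of distant translates by a random set `R`
are comparable to `|x|^(-β) Cap_α`, then for every nonempty finite `B ⊆ Ψ_n` one has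
`P(R ∩ B ≠ ∅) ≍ 2^(-nβ) Cap_α(B)`. -/
theorem statement19 (d : ℕ) (hd : 1 ≤ d) (α β : ℝ)
    (hα : α ∈ Set.Ioo (0:ℝ) d) (hβ : β ∈ Set.Ioo (0:ℝ) d)
    (c C : ℝ) (hc : 0 < c) (hcC : c ≤ C) :
    ∃ c' C' : ℝ, 0 < c' ∧ c' ≤ C' ∧
      ∀ (Ω : Type) (mΩ : MeasurableSpace Ω) (P : Measure Ω),
        IsProbabilityMeasure P →
      ∀ R : Ω → Set (Zd d),
        (@Measurable Ω (Set (Zd d)) _ (setSigma d) R) →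
        (∀ (B : Set (Zd d)), B.Finite → (0 : Zd d) ∈ B →
          ∀ x : Zd d, 2 * zdiam B ≤ znorm x →
            ENNReal.ofReal (c * znorm x ^ (-β) * discCap α B) ≤
              P {ω | (R ω ∩ (x +ᵥ B)).Nonempty} ∧
            P {ω | (R ω ∩ (x +ᵥ B)).Nonempty} ≤
              ENNReal.ofReal (C * znorm x ^ (-β) * discCap α B)) →
      ∀ (n : ℕ), 1 ≤ n →
      ∀ B : Set (Zd d), B.Nonempty → B.Finite → B ⊆ annulus d n →
        ENNReal.ofReal (c' * (2:ℝ) ^ (-(n : ℝ) * β) * discCap α B) ≤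
          P {ω | (R ω ∩ B).Nonempty} ∧
        P {ω | (R ω ∩ B).Nonempty} ≤
          ENNReal.ofReal (C' * (2:ℝ) ^ (-(n : ℝ) * β) * discCap α B) := by
  classical
  have hα0 : 0 ≤ α := hα.1.le
  have hβ0 : 0 < β := hβ.1
  have hβd : β ≤ (d:ℝ) := hβ.2.le
  have hd1 : (1:ℝ) ≤ (d:ℝ) := by exact_mod_cast hd
  set K : ℕ := (16 * d + 1) ^ d with hKdef
  have hK0 : 0 < K := by positivity
  have hK1 : (1:ℝ) ≤ (K:ℝ) := by exact_mod_cast hK0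
  have hdd_pos : 0 < (d:ℝ) ^ (-(d:ℝ)) := Real.rpow_pos_of_pos (by linarith) _
  have hdd_le1 : (d:ℝ) ^ (-(d:ℝ)) ≤ 1 :=
    Real.rpow_le_one_of_one_le_of_nonpos hd1 (neg_nonpos.mpr (by positivity))
  have h2dd : (1:ℝ) ≤ (2:ℝ) ^ (2 * (d:ℝ)) := by
    calc (1:ℝ) = (2:ℝ) ^ (0:ℝ) := (Real.rpow_zero 2).symm
    _ ≤ _ := Real.rpow_le_rpow_of_exponent_le one_le_two (by positivity)
  refine ⟨c * (d:ℝ) ^ (-(d:ℝ)) / (K:ℝ) ^ 2, (K:ℝ) * C * (2:ℝ) ^ (2 * (d:ℝ)),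
    by positivity, ?_, ?_⟩
  · have hC : 0 < C := lt_of_lt_of_le hc hcC
    calc c * (d:ℝ) ^ (-(d:ℝ)) / (K:ℝ) ^ 2 ≤ c := by
          rw [div_le_iff₀ (by positivity)]
          have h1 : c * (d:ℝ) ^ (-(d:ℝ)) ≤ c := by nlinarith
          have h2 : (1:ℝ) ≤ (K:ℝ) ^ 2 := by nlinarith
          nlinarith
    _ ≤ C := hcC
    _ ≤ (K:ℝ) * C * (2:ℝ) ^ (2 * (d:ℝ)) := by
          have h1 : C ≤ (K:ℝ) * C := by nlinarith
          have h2 : (K:ℝ) * C ≤ (K:ℝ) * C * (2:ℝ) ^ (2 * (d:ℝ)) := by nlinarith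
          linarith
  intro Ω mΩ P hP R hR hyp n hn B hBne hBfin hBsub
  -- the scale
  set sN : ℕ := max 1 (2 ^ n / (8 * d)) with hsN
  set s : ℤ := (sN : ℤ) with hs
  have hs1 : (1:ℤ) ≤ s := by
    rw [hs]; exact_mod_cast le_max_left 1 _
  have hs0 : (0:ℤ) < s := by linarith
  have h8d : 0 < 8 * d := by positivity
  have hs16N : 2 ^ n < 16 * d * sN := by
    have h1 : 2 ^ n < 8 * d * (2 ^ n / (8 * d) + 1) := by
      have h2 := Nat.div_add_mod (2 ^ n) (8 * d)
      have h3 := Nat.mod_lt (2 ^ n) h8d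
      nlinarith
    have h4 : 2 ^ n / (8 * d) ≤ sN := le_max_right _ _
    have h5 : 1 ≤ sN := le_max_left _ _
    nlinarith
  have hs16 : (2:ℤ) ^ n < 16 * d * s := by
    rw [hs]; exact_mod_cast hs16N
  -- diameter control for the scale
  have hsqrtd_le : Real.sqrt d ≤ (d:ℝ) := by
    rw [Real.sqrt_le_left (by positivity)]
    nlinarith
  have hscale : 2 * (Real.sqrt d * ((s:ℝ) - 1)) ≤ (2:ℝ) ^ ((n:ℤ) - 2) := by
    rcases eq_or_lt_of_le hs1 with h1 | h2
    · rw [← h1]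
      norm_num
      positivity
    · -- s ≥ 2, so sN = 2^n/(8d) and 8*d*sN ≤ 2^n
      have hsN2 : 2 ≤ sN := by
        rw [hs] at h2; exact_mod_cast h2
      have hsNeq : sN = 2 ^ n / (8 * d) := by
        rcases max_choice 1 (2 ^ n / (8 * d)) with h | h
        · omega
        · omega
      have hmul : 8 * d * sN ≤ 2 ^ n := by
        rw [hsNeq, mul_comm]
        exact Nat.div_mul_le_self _ _
      have hmulR : 8 * (d:ℝ) * (s:ℝ) ≤ (2:ℝ) ^ n := by
        have : ((8 * d * sN : ℕ) : ℝ) ≤ ((2 ^ n : ℕ) : ℝ) := by exact_mod_cast hmul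
        push_cast at this
        rw [hs]
        push_cast
        linarith
    -- √d (s-1) ≤ d s ≤ 2^n/8, so LHS ≤ 2^n/4 = 2^(n-2)
      have hds : Real.sqrt d * ((s:ℝ) - 1) ≤ (d:ℝ) * (s:ℝ) := by
        have h3 : (0:ℝ) ≤ (s:ℝ) - 1 := by
          have : (1:ℝ) ≤ (s:ℝ) := by exact_mod_cast hs1
          linarith
        have h4 : ((s:ℝ) - 1) ≤ (s:ℝ) := by linarith
        exact mul_le_mul hsqrtd_le h4 h3 (by positivity)
      have hzpow : (2:ℝ) ^ ((n:ℤ) - 2) = (2:ℝ) ^ n / 4 := by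
        rw [zpow_sub₀ (by norm_num : (2:ℝ) ≠ 0)]
        norm_num [zpow_natCast]
      rw [hzpow]
      linarith
  -- the pieces
  set qf : Zd d → Zd d := fun x i => x i / s with hqf
  set t : Finset (Zd d) := (hBfin.image qf).toFinset with ht
  set A : Zd d → Set (Zd d) := fun v => B ∩ qf ⁻¹' {v} with hA
  have hA_sub : ∀ v, A v ⊆ B := fun v => Set.inter_subset_left
  have hA_fin : ∀ v, (A v).Finite := fun v => hBfin.subset (hA_sub v)
  have hmem_t : ∀ x ∈ B, qf x ∈ t := by
    intro x hx
    rw [ht, Set.Finite.mem_toFinset]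
    exact ⟨x, hx, rfl⟩
  have hA_ne : ∀ v ∈ t, (A v).Nonempty := by
    intro v hv
    rw [ht, Set.Finite.mem_toFinset] at hv
    obtain ⟨x, hx, rfl⟩ := hv
    exact ⟨x, hx, rfl⟩
  have hcov : ∀ x ∈ B, ∃ v ∈ t, x ∈ A v := fun x hx =>
    ⟨qf x, hmem_t x hx, hx, rfl⟩
  have htne : t.Nonempty := by
    obtain ⟨x, hx⟩ := hBne
    exact ⟨qf x, hmem_t x hx⟩
  -- integer coordinate bound from the annulus
  have hcoord : ∀ x ∈ B, ∀ i, |x i| ≤ 2 ^ (n - 1) := by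
    intro x hx i
    have h1 := (hBsub hx).1 i
    have h2 : (2:ℝ) ^ ((n:ℤ) - 1) = (((2:ℤ) ^ (n - 1) : ℤ) : ℝ) := by
      have h3 : (n:ℤ) - 1 = ((n - 1 : ℕ) : ℤ) := by omega
      rw [h3]
      push_cast
      rw [zpow_natCast]
    rw [h2] at h1
    exact_mod_cast (by rwa [← Int.cast_abs] at h1 : ((|x i| : ℤ) : ℝ) ≤ ((2 ^ (n-1) : ℤ) : ℝ))
  -- cardinality bound
  have hcard : t.card ≤ K := by
    set L : ℤ := 2 ^ (n - 1) with hL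
    set lo : ℤ := (-L) / s with hlo
    set hi : ℤ := L / s with hhi
    have hsubset : t ⊆ Fintype.piFinset (fun _ : Fin d => Finset.Icc lo hi) := by
      intro v hv
      rw [ht, Set.Finite.mem_toFinset] at hv
      obtain ⟨x, hx, rfl⟩ := hv
      rw [Fintype.mem_piFinset]
      intro i
      rw [Finset.mem_Icc]
      have h1 := hcoord x hx i
      have h2 : -L ≤ x i := by
        have := abs_le.mp h1
        omega
      have h3 : x i ≤ L := (abs_le.mp h1).2
      exact ⟨Int.ediv_le_ediv hs0 h2, Int.ediv_le_ediv hs0 h3⟩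
    have h2L : 2 * L = 2 ^ n := by
      rw [hL, ← pow_succ']
      congr 1
      omega
    have hiub : s * hi ≤ L := by
      have h1 := Int.mul_ediv_add_emod L s
      have h2 := Int.emod_nonneg L hs0.ne'
      rw [hhi]; linarith
    have hlolb : -L - s + 1 ≤ s * lo := by
      have h1 := Int.mul_ediv_add_emod (-L) s
      have h2 := Int.emod_lt_of_pos (-L) hs0
      rw [hlo]; linarith
    have hdiff : hi - lo ≤ 16 * d := by
      have h1 : s * (hi - lo) ≤ 2 * L + s - 1 := by
        rw [mul_sub]
        linarith
      have h2 : s * (hi - lo) < s * (16 * d + 1) := by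
        have : (2:ℤ) ^ n < 16 * d * s := hs16
        nlinarith
      have h3 : hi - lo < 16 * d + 1 := lt_of_mul_lt_mul_left h2 hs0.le
      omega
    calc t.card ≤ (Fintype.piFinset (fun _ : Fin d => Finset.Icc lo hi)).card :=
          Finset.card_le_card hsubset
    _ = (Finset.Icc lo hi).card ^ d := by
        rw [Fintype.card_piFinset]
        simp
    _ ≤ (16 * d + 1) ^ d := by
        apply Nat.pow_le_pow_left
        rw [Int.card_Icc]
        rw [Int.toNat_le]
        push_cast
        omega
  -- same fiber means close coordinates
  have hsame : ∀ a b : ℤ, a / s = b / s → |a - b| ≤ s - 1 :=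
    fun a b hab => int_close s a b hs0 hab
  have hs1R : (1:ℝ) ≤ (s:ℝ) := by exact_mod_cast hs1
  -- diameter of pieces
  have hdiam : ∀ v, zdiam (A v) ≤ Real.sqrt d * ((s:ℝ) - 1) := by
    intro v
    have hr0 : (0:ℝ) ≤ Real.sqrt d * ((s:ℝ) - 1) :=
      mul_nonneg (Real.sqrt_nonneg _) (by linarith)

    apply Real.sSup_le _ hr0
    rintro r ⟨x, hx, y, hy, rfl⟩
    apply zdist_le_of_coords (by linarith : (0:ℝ) ≤ (s:ℝ) - 1)
    intro i
    rw [hA] at hx hy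
    have hq : qf x = qf y := by
      have h1 : qf x = v := hx.2
      have h2 : qf y = v := hy.2
      rw [h1, h2]
    have h1 : x i / s = y i / s := by
      have := congrFun hq i
      simpa [hqf] using this
    have h2 := hsame (x i) (y i) h1
    exact_mod_cast h2
  -- annulus norm bounds
  have hannlo : ∀ b ∈ annulus d n, (2:ℝ) ^ ((n:ℤ) - 2) ≤ znorm b := by
    intro b hb
    obtain ⟨h1, h2⟩ := hb
    push_neg at h2
    obtain ⟨i, hi⟩ := h2
    exact le_trans hi.le (abs_le_znorm b i)
  have hannhi : ∀ b ∈ annulus d n, znorm b ≤ Real.sqrt d * (2:ℝ) ^ ((n:ℤ) - 1) := by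
    intro b hb
    exact znorm_le_of_coords (by positivity) hb.1
  have hannpos : ∀ b ∈ annulus d n, 0 < znorm b := fun b hb =>
    lt_of_lt_of_le (by positivity) (hannlo b hb)
  -- rpow estimates
  set ρ : ℝ := (2:ℝ) ^ (-(n:ℝ) * β) with hρ
  have hρpos : 0 < ρ := Real.rpow_pos_of_pos two_pos _
  have hzpow_rpow : ∀ m : ℤ, (2:ℝ) ^ m = (2:ℝ) ^ ((m:ℝ)) := fun m =>
    (Real.rpow_intCast 2 m).symm
  have hupkey : ∀ b ∈ annulus d n, znorm b ^ (-β) ≤ (2:ℝ) ^ (2 * (d:ℝ)) * ρ := by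
    intro b hb
    have h1 := hannlo b hb
    have hbase : (0:ℝ) < (2:ℝ) ^ ((n:ℤ) - 2) := by positivity
    have h2 : znorm b ^ (-β) ≤ ((2:ℝ) ^ ((n:ℤ) - 2)) ^ (-β) :=
      rpow_neg_anti hbase h1 hβ0.le
    have h3 : ((2:ℝ) ^ ((n:ℤ) - 2)) ^ (-β) = (2:ℝ) ^ (((n:ℝ) - 2) * (-β)) := by
      rw [hzpow_rpow ((n:ℤ) - 2), ← Real.rpow_mul (by norm_num : (0:ℝ) ≤ 2)]
      push_cast
      ring_nf
    have h4 : (2:ℝ) ^ (((n:ℝ) - 2) * (-β)) ≤ (2:ℝ) ^ (-(n:ℝ) * β + 2 * (d:ℝ)) := by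
      apply Real.rpow_le_rpow_of_exponent_le one_le_two
      nlinarith
    have h5 : (2:ℝ) ^ (-(n:ℝ) * β + 2 * (d:ℝ)) = (2:ℝ) ^ (2 * (d:ℝ)) * ρ := by
      rw [Real.rpow_add two_pos, hρ]
      ring
    calc znorm b ^ (-β) ≤ ((2:ℝ) ^ ((n:ℤ) - 2)) ^ (-β) := h2
    _ = (2:ℝ) ^ (((n:ℝ) - 2) * (-β)) := h3
    _ ≤ (2:ℝ) ^ (-(n:ℝ) * β + 2 * (d:ℝ)) := h4
    _ = (2:ℝ) ^ (2 * (d:ℝ)) * ρ := h5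
  have hlokey : ∀ b ∈ annulus d n, (d:ℝ) ^ (-(d:ℝ)) * ρ ≤ znorm b ^ (-β) := by
    intro b hb
    have hpos := hannpos b hb
    have h1 : znorm b ≤ (d:ℝ) * (2:ℝ) ^ ((n:ℝ)) := by
      have h2 := hannhi b hb
      have h3 : (2:ℝ) ^ ((n:ℤ) - 1) ≤ (2:ℝ) ^ ((n:ℝ)) := by
        rw [hzpow_rpow ((n:ℤ) - 1)]
        apply Real.rpow_le_rpow_of_exponent_le one_le_two
        push_cast
        linarith
      have h4 : Real.sqrt d * (2:ℝ) ^ ((n:ℤ) - 1) ≤ (d:ℝ) * (2:ℝ) ^ ((n:ℝ)) := by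
        apply mul_le_mul hsqrtd_le h3 (by positivity) (by positivity)
      linarith
    have h2 : ((d:ℝ) * (2:ℝ) ^ ((n:ℝ))) ^ (-β) ≤ znorm b ^ (-β) :=
      rpow_neg_anti hpos h1 hβ0.le
    have h3 : ((d:ℝ) * (2:ℝ) ^ ((n:ℝ))) ^ (-β)
        = (d:ℝ) ^ (-β) * ((2:ℝ) ^ ((n:ℝ))) ^ (-β) :=
      Real.mul_rpow (by positivity) (by positivity)
    have h4 : ((2:ℝ) ^ ((n:ℝ))) ^ (-β) = ρ := by
      rw [← Real.rpow_mul (by norm_num : (0:ℝ) ≤ 2), hρ]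
      ring_nf
    have h5 : (d:ℝ) ^ (-(d:ℝ)) ≤ (d:ℝ) ^ (-β) :=
      Real.rpow_le_rpow_of_exponent_le hd1 (by linarith)
    calc (d:ℝ) ^ (-(d:ℝ)) * ρ ≤ (d:ℝ) ^ (-β) * ρ :=
          mul_le_mul_of_nonneg_right h5 hρpos.le
    _ = ((d:ℝ) * (2:ℝ) ^ ((n:ℝ))) ^ (-β) := by rw [h3, h4]
    _ ≤ znorm b ^ (-β) := h2
  -- per piece, the hitting bounds from the hypothesis
  have hbounds : ∀ v ∈ t, ∃ b : Zd d, b ∈ annulus d n ∧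
      (ENNReal.ofReal (c * znorm b ^ (-β) * discCap α (A v)) ≤
        P {ω | (R ω ∩ A v).Nonempty}) ∧
      (P {ω | (R ω ∩ A v).Nonempty} ≤
        ENNReal.ofReal (C * znorm b ^ (-β) * discCap α (A v))) := by
    intro v hv
    obtain ⟨b, hb⟩ := hA_ne v hv
    have hbB : b ∈ B := hA_sub v hb
    have hbann : b ∈ annulus d n := hBsub hbB
    set B' : Set (Zd d) := (-b) +ᵥ A v with hB'
    have hfin' : B'.Finite := vadd_finite (hA_fin v) (-b)
    have h0 : (0 : Zd d) ∈ B' := by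
      rw [hB', Set.mem_vadd_set]
      exact ⟨b, hb, by simp [vadd_eq_add]⟩
    have hdiam' : zdiam B' = zdiam (A v) := by
      rw [hB']; exact zdiam_vadd _ _
    have hcond : 2 * zdiam B' ≤ znorm b := by
      rw [hdiam']
      calc 2 * zdiam (A v) ≤ 2 * (Real.sqrt d * ((s:ℝ) - 1)) := by
            have := hdiam v; linarith
      _ ≤ (2:ℝ) ^ ((n:ℤ) - 2) := hscale
      _ ≤ znorm b := hannlo b hbann
    have h := hyp B' hfin' h0 b hcond
    have hset : b +ᵥ B' = A v := by
      rw [hB', vadd_vadd, add_neg_cancel, zero_vadd]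
    have hcap : discCap α B' = discCap α (A v) := by
      rw [hB']; exact discCap_vadd (hA_fin v) (-b)
    rw [hset, hcap] at h
    exact ⟨b, hbann, h.1, h.2⟩
  -- capacities
  have hCapAB : ∀ v ∈ t, discCap α (A v) ≤ discCap α B :=
    fun v hv => discCap_mono hBfin hα0 (hA_ne v hv) (hA_sub v)
  have hCapA0 : ∀ v ∈ t, 0 ≤ discCap α (A v) :=
    fun v hv => discCap_nonneg (hA_fin v) hα0 (hA_ne v hv)
  have hCapB0 : 0 ≤ discCap α B := discCap_nonneg hBfin hα0 hBne
  have hC : 0 < C := lt_of_lt_of_le hc hcC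
  -- event decomposition
  have hevent : {ω | (R ω ∩ B).Nonempty} = ⋃ v ∈ t, {ω | (R ω ∩ A v).Nonempty} := by
    ext ω
    simp only [Set.mem_setOf_eq, Set.mem_iUnion]
    constructor
    · rintro ⟨x, hxR, hxB⟩
      exact ⟨qf x, hmem_t x hxB, x, hxR, hxB, rfl⟩
    · rintro ⟨v, hv, x, hxR, hxA⟩
      exact ⟨x, hxR, hA_sub v hxA⟩
  constructor
  · -- lower bound
    obtain ⟨v₀, hv₀, hgood⟩ := exists_good_piece hα0 hBfin hBne
      (fun v _ => hA_sub v) hA_ne hcov htne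
    obtain ⟨b₀, hb₀ann, hb₀lo, _⟩ := hbounds v₀ hv₀
    have hreal : c * (d:ℝ) ^ (-(d:ℝ)) / (K:ℝ) ^ 2 * ((2:ℝ) ^ (-(n:ℝ) * β)) * discCap α B
        ≤ c * znorm b₀ ^ (-β) * discCap α (A v₀) := by
      have hcard2 : ((t.card : ℝ)) ^ 2 ≤ (K:ℝ) ^ 2 := by
        have : (t.card : ℝ) ≤ (K:ℝ) := by exact_mod_cast hcard
        nlinarith [Nat.cast_nonneg (α := ℝ) t.card]
      have h1 : discCap α B ≤ (K:ℝ) ^ 2 * discCap α (A v₀) := by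
        calc discCap α B ≤ (t.card : ℝ) ^ 2 * discCap α (A v₀) := hgood
        _ ≤ (K:ℝ) ^ 2 * discCap α (A v₀) :=
            mul_le_mul_of_nonneg_right hcard2 (hCapA0 v₀ hv₀)
      have h2 : (d:ℝ) ^ (-(d:ℝ)) * ρ ≤ znorm b₀ ^ (-β) := hlokey b₀ hb₀ann
      have hKpos : (0:ℝ) < (K:ℝ) ^ 2 := by positivity
      calc c * (d:ℝ) ^ (-(d:ℝ)) / (K:ℝ) ^ 2 * ρ * discCap α B
          ≤ c * (d:ℝ) ^ (-(d:ℝ)) / (K:ℝ) ^ 2 * ρ * ((K:ℝ) ^ 2 * discCap α (A v₀)) := by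
            apply mul_le_mul_of_nonneg_left h1 (by positivity)
      _ = c * ((d:ℝ) ^ (-(d:ℝ)) * ρ) * discCap α (A v₀) := by
            field_simp
      _ ≤ c * znorm b₀ ^ (-β) * discCap α (A v₀) := by
            apply mul_le_mul_of_nonneg_right _ (hCapA0 v₀ hv₀)
            apply mul_le_mul_of_nonneg_left h2 hc.le
    calc ENNReal.ofReal (c * (d:ℝ) ^ (-(d:ℝ)) / (K:ℝ) ^ 2 * ((2:ℝ) ^ (-(n:ℝ) * β)) * discCap α B)
        ≤ ENNReal.ofReal (c * znorm b₀ ^ (-β) * discCap α (A v₀)) :=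
          ENNReal.ofReal_le_ofReal hreal
    _ ≤ P {ω | (R ω ∩ A v₀).Nonempty} := hb₀lo
    _ ≤ P {ω | (R ω ∩ B).Nonempty} := by
          apply measure_mono
          intro ω hω
          obtain ⟨x, hxR, hxA⟩ := hω
          exact ⟨x, hxR, hA_sub v₀ hxA⟩
  · -- upper bound
    have hstep : ∀ v ∈ t, P {ω | (R ω ∩ A v).Nonempty}
        ≤ ENNReal.ofReal (C * ((2:ℝ) ^ (2 * (d:ℝ)) * ρ) * discCap α B) := by
      intro v hv
      obtain ⟨b, hbann, _, hbhi⟩ := hbounds v hv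
      refine le_trans hbhi (ENNReal.ofReal_le_ofReal ?_)
      have h1 : znorm b ^ (-β) ≤ (2:ℝ) ^ (2 * (d:ℝ)) * ρ := hupkey b hbann
      have h2 : (0:ℝ) ≤ znorm b ^ (-β) := Real.rpow_nonneg (hannpos b hbann).le _
      calc C * znorm b ^ (-β) * discCap α (A v)
          ≤ C * znorm b ^ (-β) * discCap α B :=
            mul_le_mul_of_nonneg_left (hCapAB v hv) (by positivity)
      _ ≤ C * ((2:ℝ) ^ (2 * (d:ℝ)) * ρ) * discCap α B := by
            apply mul_le_mul_of_nonneg_right _ hCapB0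
            apply mul_le_mul_of_nonneg_left h1 hC.le
    calc P {ω | (R ω ∩ B).Nonempty}
        = P (⋃ v ∈ t, {ω | (R ω ∩ A v).Nonempty}) := by rw [hevent]
    _ ≤ ∑ v ∈ t, P {ω | (R ω ∩ A v).Nonempty} := measure_biUnion_finset_le _ _
    _ ≤ ∑ _v ∈ t, ENNReal.ofReal (C * ((2:ℝ) ^ (2 * (d:ℝ)) * ρ) * discCap α B) :=
          Finset.sum_le_sum hstep
    _ = (t.card : ℝ≥0∞) * ENNReal.ofReal (C * ((2:ℝ) ^ (2 * (d:ℝ)) * ρ) * discCap α B) := by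
          rw [Finset.sum_const, nsmul_eq_mul]
    _ ≤ (K : ℝ≥0∞) * ENNReal.ofReal (C * ((2:ℝ) ^ (2 * (d:ℝ)) * ρ) * discCap α B) := by
          apply mul_le_mul_left
          exact_mod_cast hcard
    _ = ENNReal.ofReal ((K:ℝ) * (C * ((2:ℝ) ^ (2 * (d:ℝ)) * ρ) * discCap α B)) := by
          rw [ENNReal.ofReal_mul (p := (K:ℝ)) (by positivity), ENNReal.ofReal_natCast]
    _ ≤ ENNReal.ofReal ((K:ℝ) * C * (2:ℝ) ^ (2 * (d:ℝ)) * ((2:ℝ) ^ (-(n:ℝ) * β)) * discCap α B) := by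
          apply ENNReal.ofReal_le_ofReal
          rw [hρ]
          apply le_of_eq
          ring
end
end
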